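/- Under a directed expander topology with a fixed root set R and expansion constant alpha, information spreads within the root component in O(log n) rounds: for a p in R, defining P_0 = {p} and P_{i+1} as P_i together with all vertices of R having an in-neighbor in P_i in round a+i, if Property (a) holds in every round then |P_i| >= min{(1+alpha)^i, |R|/2} for all i, so P_l > |R|/2 for l = ceil(log(|R|/2)/log(1+alpha)). -/
import Mathlib


/-- A root component of a directed graph `G`: a strongly connected component
(maximal set of mutually reachable vertices) with no incoming edges from outside. -/
def IsRootComponent {V : Type*} (G : V → V → Prop) (R : Set V) : Prop :=
  R.Nonempty ∧ (∀ p ∈ R, ∀ q ∈ R, Relation.ReflTransGen G p q) ∧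
    ∀ p ∈ R, ∀ q, G q p → q ∈ R

/-- A causal influence chain of length `k` from `p` (starting in round `r`) to `q`. -/
def InflChain {V : Type*} (G : ℕ → V → V → Prop) (r : ℕ) (p q : V) (k : ℕ) : Prop :=
  ∃ f : ℕ → V, f 0 = p ∧ f k = q ∧ ∀ i < k, f i = f (i + 1) ∨ G (r + i) (f i) (f (i + 1))

/-- The dynamic causal distance `cd_r(p,q)`: length of the shortest causal influence
chain from `p` starting in round `r` to `q` (`⊤` if none exists, `1` for `p = q`). -/
noncomputable def cd {V : Type*} (G : ℕ → V → V → Prop) (r : ℕ) (p q : V) : ℕ∞ :=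
  sInf {k : ℕ∞ | ∃ m : ℕ, k = (m : ℕ∞) ∧ 1 ≤ m ∧ InflChain G r p q m}

/-- Expander growth lemma: under Property (a) of a directed expander topology
with root set `R` and expansion constant `α > 0` (in every round, every
`S ⊆ R` with `|S| ≤ |R|/2` has at least `α|S|` out-neighbors and in-neighbors
within `R` outside `S`), the forward-influenced sets `P 0 = {p}`,
`P (i+1) = P i ∪ {w ∈ R | ∃ v ∈ P i, (v → w) ∈ G^{a+i}}` satisfy
`|P i| ≥ min{(1+α)^i, |R|/2}`; consequently `|P l| > |R|/2` for every `l` with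
`(1+α)^l > |R|/2` (in particular for `l = ⌈log(|R|/2)/log(1+α)⌉`). -/
theorem stmt_17 {V : Type*} [Fintype V] (G : ℕ → V → V → Prop) (R : Set V)
    (α : ℝ) (hα : 0 < α)
    (hexp : ∀ (r : ℕ) (S : Set V), S ⊆ R → (S.ncard : ℝ) ≤ (R.ncard : ℝ) / 2 →
      α * (S.ncard : ℝ) ≤ (({w | w ∈ R ∧ w ∉ S ∧ ∃ v ∈ S, G r v w}).ncard : ℝ) ∧
      α * (S.ncard : ℝ) ≤ (({w | w ∈ R ∧ w ∉ S ∧ ∃ v ∈ S, G r w v}).ncard : ℝ))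
    (p : V) (hp : p ∈ R) (a : ℕ)
    (P : ℕ → Set V)
    (hP0 : P 0 = {p})
    (hPstep : ∀ i, P (i + 1) = P i ∪ {w | w ∈ R ∧ ∃ v ∈ P i, G (a + i) v w}) :
    (∀ i : ℕ, min ((1 + α) ^ i) ((R.ncard : ℝ) / 2) ≤ ((P i).ncard : ℝ)) ∧
    ∀ l : ℕ, (R.ncard : ℝ) / 2 < (1 + α) ^ l →
      (R.ncard : ℝ) / 2 < ((P l).ncard : ℝ) := by
  have hPR : ∀ i, P i ⊆ R := by
    intro i
    induction i with
    | zero => rw [hP0]; simpa using hp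
    | succ n ih =>
      rw [hPstep]
      rintro w (h | ⟨hw, _⟩)
      exacts [ih h, hw]
  have hmono : ∀ i, P i ⊆ P (i+1) := by
    intro i; rw [hPstep]; exact Set.subset_union_left
  have hcard_mono : ∀ i, ((P i).ncard : ℝ) ≤ ((P (i+1)).ncard : ℝ) := by
    intro i
    exact_mod_cast Nat.cast_le.mpr (Set.ncard_le_ncard (hmono i) (Set.toFinite _))
  have hgrow : ∀ i, ((P i).ncard : ℝ) ≤ (R.ncard : ℝ)/2 →
      (1+α) * ((P i).ncard : ℝ) ≤ ((P (i+1)).ncard : ℝ) := by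
    intro i hle
    obtain ⟨h1, _⟩ := hexp (a+i) (P i) (hPR i) hle
    set N := {w | w ∈ R ∧ w ∉ P i ∧ ∃ v ∈ P i, G (a+i) v w} with hN
    have hNsub : N ⊆ P (i+1) := by
      rw [hPstep]
      rintro w ⟨hwR, hwn, hv⟩
      exact Or.inr ⟨hwR, hv⟩
    have hdisj : Disjoint (P i) N := by
      rw [Set.disjoint_left]
      rintro w hw ⟨_, hwn, _⟩
      exact hwn hw
    have hsub2 : P i ∪ N ⊆ P (i+1) := Set.union_subset (hmono i) hNsub
    have hcard : (P i).ncard + N.ncard ≤ (P (i+1)).ncard := by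
      rw [← Set.ncard_union_eq hdisj (Set.toFinite _) (Set.toFinite _)]
      exact Set.ncard_le_ncard hsub2 (Set.toFinite _)
    have hc : ((P i).ncard : ℝ) + (N.ncard : ℝ) ≤ ((P (i+1)).ncard : ℝ) := by
      exact_mod_cast hcard
    nlinarith
  have hdisj : ∀ i, (1+α)^i ≤ ((P i).ncard : ℝ) ∨ (R.ncard : ℝ)/2 < ((P i).ncard : ℝ) := by
    intro i
    induction i with
    | zero =>
      left
      rw [hP0]
      simp
    | succ n ih =>
      rcases le_or_gt ((P n).ncard : ℝ) ((R.ncard : ℝ)/2) with h | h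
      · left
        have h1 : (1+α)^n ≤ ((P n).ncard : ℝ) := by
          rcases ih with h' | h'
          · exact h'
          · linarith
        have h2 := hgrow n h
        calc (1+α)^(n+1) = (1+α) * (1+α)^n := by ring
          _ ≤ (1+α) * ((P n).ncard : ℝ) := by nlinarith
          _ ≤ _ := h2
      · right
        exact lt_of_lt_of_le h (hcard_mono n)
  constructor
  · intro i
    rcases hdisj i with h | h
    · exact le_trans (min_le_left _ _) h
    · exact le_trans (min_le_right _ _) h.le
  · intro l hl
    rcases hdisj l with h | h
    · linarith
    · exact h
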